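/- Commutativity of weak curl with projection: for ψ ∈ H(curl;T), the discrete weak curl of the projected weak vector field ℚ_h ψ = {ℚ₀ψ, ℚ_bψ} equals the L² projection of the classical curl: ∇_w×(ℚ_h ψ) = 𝒬_h(∇×ψ). -/
import Mathlib


open scoped RealInnerProductSpace

/-- Commutativity of the weak curl with projection: for
`ψ ∈ H(curl;T)`, the discrete weak curl of the projected weak vector field
`ℚ_h ψ = {ℚ₀ψ, ℚ_bψ}` equals the L² projection of the classical curl:
`∇_w×(ℚ_h ψ) = 𝒬_h(∇×ψ)`.

Abstraction: `Vv = [L²(T)]³` with polynomial subspace `PkV = [P_k(T)]³`, `Bv` the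
boundary L² tangential fields with subspace `Gk = [P_k(σ)]³×n_σ`; `QV` and `Qb` are
the L² projections `ℚ₀ = 𝒬_h` and `ℚ_b`; `curlM` is the curl of polynomial test
fields; `bp b φ = ⟨b×n, φ⟩_{∂T}`, which for polynomial `φ` is represented by an
element of `Gk` (hypothesis `hbp`).  `ψ` is given by its value `psi0`, tangential
trace `psitr`, and curl `cpsi`, tied by the integration-by-parts identity
`(∇×ψ, φ)_T = (ψ, ∇×φ)_T - ⟨ψ×n, φ⟩_{∂T}`.  Any `C ∈ [P_k(T)]³` satisfying the
defining relation of `∇_w×(ℚ_h ψ)` equals `𝒬_h(∇×ψ) = QV cpsi`. -/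
theorem stmt_11
    {Vv Bv : Type*}
    [NormedAddCommGroup Vv] [InnerProductSpace ℝ Vv]
    [NormedAddCommGroup Bv] [InnerProductSpace ℝ Bv]
    (PkV : Submodule ℝ Vv) (Gk : Submodule ℝ Bv)
    (QV : Vv →ₗ[ℝ] Vv) (hQVmem : ∀ v, QV v ∈ PkV)
    (hQVorth : ∀ v : Vv, ∀ p ∈ PkV, ⟪v - QV v, p⟫ = 0)
    (Qb : Bv →ₗ[ℝ] Bv) (hQbmem : ∀ b, Qb b ∈ Gk)
    (hQborth : ∀ b : Bv, ∀ p ∈ Gk, ⟪b - Qb b, p⟫ = 0)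
    (curlM : Vv →ₗ[ℝ] Vv) (hcurlMem : ∀ φ ∈ PkV, curlM φ ∈ PkV)
    -- boundary pairing ⟨b×n, φ⟩_{∂T}
    (bp : Bv →ₗ[ℝ] Vv →ₗ[ℝ] ℝ)
    (hbp : ∀ φ ∈ PkV, ∃ g ∈ Gk, ∀ b : Bv, bp b φ = ⟪b, g⟫)
    -- ψ ∈ H(curl;T): value psi0, tangential trace psitr, curl cpsi
    (psi0 : Vv) (psitr : Bv) (cpsi : Vv)
    (hIBP : ∀ φ ∈ PkV, ⟪cpsi, φ⟫ = ⟪psi0, curlM φ⟫ - bp psitr φ)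
    -- C is the discrete weak curl of ℚ_h ψ = {QV psi0, Qb psitr}
    (C : Vv) (hCmem : C ∈ PkV)
    (hC : ∀ φ ∈ PkV, ⟪C, φ⟫ = ⟪QV psi0, curlM φ⟫ - bp (Qb psitr) φ) :
    C = QV cpsi := by
  have key : ∀ φ ∈ PkV, ⟪C - QV cpsi, φ⟫ = 0 := by
    intro φ hφ
    have h1 : ⟪QV cpsi, φ⟫ = ⟪cpsi, φ⟫ := by
      have := hQVorth cpsi φ hφ
      rw [inner_sub_left] at this; linarith
    have h2 : ⟪QV psi0, curlM φ⟫ = ⟪psi0, curlM φ⟫ := by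
      have := hQVorth psi0 (curlM φ) (hcurlMem φ hφ)
      rw [inner_sub_left] at this; linarith
    have h3 : bp (Qb psitr) φ = bp psitr φ := by
      obtain ⟨g, hg, hgb⟩ := hbp φ hφ
      have := hQborth psitr g hg
      rw [inner_sub_left] at this
      rw [hgb, hgb]; linarith
    rw [inner_sub_left, h1, hIBP φ hφ, hC φ hφ, h2, h3]
    ring
  have hz := key _ (Submodule.sub_mem _ hCmem (hQVmem cpsi))
  rw [inner_self_eq_zero, sub_eq_zero] at hz
  exact hz
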